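/- arXiv:1607.08117 — 4 statements merged into one kernel-verified Lean document; each statement's English description precedes it below -/
import Mathlib

section
/- Let Γ₂ = ⟨5, 25ℓ+1⟩ be the numerical semigroup generated by 5 and 25ℓ+1, where ℓ is a positive integer. Then its enumerating function satisfies: Γ₂(k) = 5k for 0 ≤ k ≤ 5ℓ; Γ₂(k) = 25ℓ + 5·⌊(k−5ℓ)/2⌋ + ((k−5ℓ) mod 2) for 5ℓ ≤ k ≤ 15ℓ; Γ₂(k) = 50ℓ + 5·⌊(k−15ℓ)/3⌋ + ((k−15ℓ) mod 3) for 15ℓ ≤ k ≤ 30ℓ; Γ₂(k) = 75ℓ + 5·⌊(k−30ℓ)/4⌋ + ((k−30ℓ) mod 4) for 30ℓ ≤ k ≤ 50ℓ; and Γ₂(k) = 50ℓ + k for k ≥ 50ℓ. -/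
/-- Membership in the numerical semigroup `⟨5, 25ℓ+1⟩`. -/
def inGamma2 (ℓ : ℕ) (x : ℕ) : Prop := ∃ a b : ℕ, x = 5 * a + (25 * ℓ + 1) * b

/-- The explicit piecewise enumerating function. -/
def f2 (ℓ k : ℕ) : ℕ :=
  if k ≤ 5 * ℓ then 5 * k
  else if k ≤ 15 * ℓ then 25 * ℓ + 5 * ((k - 5 * ℓ) / 2) + (k - 5 * ℓ) % 2
  else if k ≤ 30 * ℓ then 50 * ℓ + 5 * ((k - 15 * ℓ) / 3) + (k - 15 * ℓ) % 3
  else if k ≤ 50 * ℓ then 75 * ℓ + 5 * ((k - 30 * ℓ) / 4) + (k - 30 * ℓ) % 4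
  else 50 * ℓ + k

/-- Its inverse on the semigroup. -/
def g2 (ℓ x : ℕ) : ℕ :=
  if x ≤ 25 * ℓ then x / 5
  else if x ≤ 50 * ℓ + 1 then 5 * ℓ + 2 * ((x - 25 * ℓ) / 5) + x % 5
  else if x ≤ 75 * ℓ + 2 then 15 * ℓ + 3 * ((x - 50 * ℓ) / 5) + x % 5
  else if x ≤ 100 * ℓ + 3 then 30 * ℓ + 4 * ((x - 75 * ℓ) / 5) + x % 5
  else x - 50 * ℓ

/-- A strictly monotone function whose range is exactly `setOf p` is `Nat.nth p`. -/
lemma nth_eq_of_strictMono {p : ℕ → Prop} (f : ℕ → ℕ) (hf : StrictMono f)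
    (hr : ∀ x, p x ↔ ∃ k, f k = x) : ∀ n, Nat.nth p n = f n := by
  intro n
  induction n using Nat.strong_induction_on with
  | _ n ih =>
    rw [Nat.nth_eq_sInf]
    have hset : {x | p x ∧ ∀ k < n, Nat.nth p k < x}
        = {x | (∃ m, f m = x) ∧ ∀ k < n, f k < x} := by
      ext x
      simp only [Set.mem_setOf_eq, hr]
      refine and_congr Iff.rfl ?_
      constructor
      · intro h k hk; rw [← ih k hk]; exact h k hk
      · intro h k hk; rw [ih k hk]; exact h k hk
    rw [hset]
    apply IsLeast.csInf_eq
    constructor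
    · exact ⟨⟨n, rfl⟩, fun k hk => hf hk⟩
    · rintro x ⟨⟨m, rfl⟩, hx⟩
      by_contra h
      push_neg at h
      exact lt_irrefl _ (hx m (hf.lt_iff_lt.mp h))

lemma f2_strictMono (ℓ : ℕ) (hℓ : 0 < ℓ) : StrictMono (f2 ℓ) := by
  apply strictMono_nat_of_lt_succ
  intro k
  simp only [f2]
  split_ifs <;> omega

set_option maxHeartbeats 2000000 in
lemma f2_range (ℓ : ℕ) (hℓ : 0 < ℓ) :
    ∀ x, inGamma2 ℓ x ↔ ∃ k, f2 ℓ k = x := by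
  intro x
  constructor
  · rintro ⟨a, b, rfl⟩
    have hb : b = 5 * (b / 5) + b % 5 := by omega
    have key : 5 * a + (25 * ℓ + 1) * b
        = 5 * (a + (25 * ℓ + 1) * (b / 5)) + 25 * ℓ * (b % 5) + b % 5 := by
      conv_lhs => rw [hb]
      ring
    rw [key]
    set A := a + (25 * ℓ + 1) * (b / 5) with hA
    refine ⟨g2 ℓ (5 * A + 25 * ℓ * (b % 5) + b % 5), ?_⟩
    have hc : b % 5 = 0 ∨ b % 5 = 1 ∨ b % 5 = 2 ∨ b % 5 = 3 ∨ b % 5 = 4 := by omega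
    rcases hc with h | h | h | h | h <;> rw [h] <;>
      (simp only [g2]; split_ifs) <;> (simp only [f2]; split_ifs) <;> omega
  · rintro ⟨k, rfl⟩
    simp only [f2]
    split_ifs with h1 h2 h3 h4
    · exact ⟨k, 0, by omega⟩
    · rcases (show (k - 5 * ℓ) % 2 = 0 ∨ (k - 5 * ℓ) % 2 = 1 by omega) with h | h
      · exact ⟨5 * ℓ + (k - 5 * ℓ) / 2, 0, by omega⟩
      · exact ⟨(k - 5 * ℓ) / 2, 1, by omega⟩
    · rcases (show (k - 15 * ℓ) % 3 = 0 ∨ (k - 15 * ℓ) % 3 = 1 ∨ (k - 15 * ℓ) % 3 = 2 by omega)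
        with h | h | h
      · exact ⟨10 * ℓ + (k - 15 * ℓ) / 3, 0, by omega⟩
      · exact ⟨5 * ℓ + (k - 15 * ℓ) / 3, 1, by omega⟩
      · exact ⟨(k - 15 * ℓ) / 3, 2, by omega⟩
    · rcases (show (k - 30 * ℓ) % 4 = 0 ∨ (k - 30 * ℓ) % 4 = 1 ∨ (k - 30 * ℓ) % 4 = 2 ∨
          (k - 30 * ℓ) % 4 = 3 by omega) with h | h | h | h
      · exact ⟨15 * ℓ + (k - 30 * ℓ) / 4, 0, by omega⟩
      · exact ⟨10 * ℓ + (k - 30 * ℓ) / 4, 1, by omega⟩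
      · exact ⟨5 * ℓ + (k - 30 * ℓ) / 4, 2, by omega⟩
      · exact ⟨(k - 30 * ℓ) / 4, 3, by omega⟩
    · rcases (show k % 5 = 0 ∨ k % 5 = 1 ∨ k % 5 = 2 ∨ k % 5 = 3 ∨ k % 5 = 4 by omega)
        with h | h | h | h | h
      · exact ⟨10 * ℓ + k / 5, 0, by omega⟩
      · exact ⟨(50 * ℓ + k - 25 * ℓ - 1) / 5, 1, by omega⟩
      · exact ⟨(50 * ℓ + k - 50 * ℓ - 2) / 5, 2, by omega⟩
      · exact ⟨(50 * ℓ + k - 75 * ℓ - 3) / 5, 3, by omega⟩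
      · exact ⟨(50 * ℓ + k - 100 * ℓ - 4) / 5, 4, by omega⟩

/-- The enumerating function (`Nat.nth`) of `⟨5, 25ℓ+1⟩`, computed on five ranges. -/
theorem stmt_6 (ℓ : ℕ) (hℓ : 0 < ℓ) :
    (∀ k : ℕ, k ≤ 5 * ℓ → Nat.nth (inGamma2 ℓ) k = 5 * k) ∧
    (∀ k : ℕ, 5 * ℓ ≤ k → k ≤ 15 * ℓ →
      Nat.nth (inGamma2 ℓ) k = 25 * ℓ + 5 * ((k - 5 * ℓ) / 2) + (k - 5 * ℓ) % 2) ∧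
    (∀ k : ℕ, 15 * ℓ ≤ k → k ≤ 30 * ℓ →
      Nat.nth (inGamma2 ℓ) k = 50 * ℓ + 5 * ((k - 15 * ℓ) / 3) + (k - 15 * ℓ) % 3) ∧
    (∀ k : ℕ, 30 * ℓ ≤ k → k ≤ 50 * ℓ →
      Nat.nth (inGamma2 ℓ) k = 75 * ℓ + 5 * ((k - 30 * ℓ) / 4) + (k - 30 * ℓ) % 4) ∧
    (∀ k : ℕ, 50 * ℓ ≤ k → Nat.nth (inGamma2 ℓ) k = 50 * ℓ + k) := by
  have hnth := nth_eq_of_strictMono (f2 ℓ) (f2_strictMono ℓ hℓ) (f2_range ℓ hℓ)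
  refine ⟨?_, ?_, ?_, ?_, ?_⟩
  · intro k hk; rw [hnth k]; simp only [f2]; split_ifs <;> omega
  · intro k hk1 hk2; rw [hnth k]; simp only [f2]; split_ifs <;> omega
  · intro k hk1 hk2; rw [hnth k]; simp only [f2]; split_ifs <;> omega
  · intro k hk1 hk2; rw [hnth k]; simp only [f2]; split_ifs <;> omega
  · intro k hk; rw [hnth k]; simp only [f2]; split_ifs <;> omega
end

section
/- Let ℓ be a positive integer and let Γ₁, Γ₂ be the enumerating functions of the numerical semigroups ⟨2, 10ℓ+1⟩ and ⟨5, 25ℓ+1⟩ respectively. Define f(k) = Γ₂(k + 13ℓ) − Γ₁(k) for 0 ≤ k ≤ 5ℓ. Then min_{0 ≤ k ≤ 5ℓ} f(k) = 45ℓ − 1, and the minimum is attained at k = 1 and at k = 5ℓ − 1. -/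
/-- Membership in the numerical semigroup `⟨2, 10ℓ+1⟩`. -/
def inGamma1 (ℓ : ℕ) (x : ℕ) : Prop := ∃ a b : ℕ, x = 2 * a + (10 * ℓ + 1) * b

/-- `f k = Γ₂(k + 13ℓ) − Γ₁(k)`, where `Γᵢ` are the enumerating functions
(`Nat.nth`) of the two semigroups. -/
noncomputable def fdiff (ℓ k : ℕ) : ℤ :=
  (Nat.nth (inGamma2 ℓ) (k + 13 * ℓ) : ℤ) - (Nat.nth (inGamma1 ℓ) k : ℤ)

lemma mem1_iff (ℓ x : ℕ) : inGamma1 ℓ x ↔ (10 * ℓ + 1) * (x % 2) ≤ x := by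
  constructor
  · rintro ⟨a, b, rfl⟩
    have h : 2 * a + (10 * ℓ + 1) * b = 2 * (a + 5 * ℓ * b) + b := by ring
    rw [h, Nat.mul_add_mod]
    calc (10 * ℓ + 1) * (b % 2) ≤ (10 * ℓ + 1) * b :=
          Nat.mul_le_mul_left _ (Nat.mod_le _ _)
      _ ≤ 2 * (a + 5 * ℓ * b) + b := by
          have : (10 * ℓ + 1) * b = 10 * ℓ * b + b := by ring
          omega
  · intro h
    have h2 : x % 2 = 0 ∨ x % 2 = 1 := by omega
    rcases h2 with h2 | h2
    · exact ⟨x / 2, 0, by rw [h2] at h; omega⟩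
    · exact ⟨(x - (10 * ℓ + 1)) / 2, 1, by rw [h2] at h; omega⟩

lemma mem2_iff (ℓ x : ℕ) : inGamma2 ℓ x ↔ (25 * ℓ + 1) * (x % 5) ≤ x := by
  constructor
  · rintro ⟨a, b, rfl⟩
    have h : 5 * a + (25 * ℓ + 1) * b = 5 * (a + 5 * ℓ * b) + b := by ring
    rw [h, Nat.mul_add_mod]
    calc (25 * ℓ + 1) * (b % 5) ≤ (25 * ℓ + 1) * b :=
          Nat.mul_le_mul_left _ (Nat.mod_le _ _)
      _ ≤ 5 * (a + 5 * ℓ * b) + b := by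
          have : (25 * ℓ + 1) * b = 25 * ℓ * b + b := by ring
          omega
  · intro h
    have h5 : x % 5 = 0 ∨ x % 5 = 1 ∨ x % 5 = 2 ∨ x % 5 = 3 ∨ x % 5 = 4 := by omega
    rcases h5 with h5 | h5 | h5 | h5 | h5 <;> rw [h5] at h
    · exact ⟨x / 5, 0, by omega⟩
    · exact ⟨(x - (25 * ℓ + 1)) / 5, 1, by omega⟩
    · exact ⟨(x - (25 * ℓ + 1) * 2) / 5, 2, by omega⟩
    · exact ⟨(x - (25 * ℓ + 1) * 3) / 5, 3, by omega⟩
    · exact ⟨(x - (25 * ℓ + 1) * 4) / 5, 4, by omega⟩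

instance (ℓ : ℕ) : DecidablePred (inGamma1 ℓ) :=
  fun x => decidable_of_iff _ (mem1_iff ℓ x).symm

instance (ℓ : ℕ) : DecidablePred (inGamma2 ℓ) :=
  fun x => decidable_of_iff _ (mem2_iff ℓ x).symm

lemma count_two (q : ℕ → Prop) [DecidablePred q] :
    Nat.count q 2 = (if q 0 then 1 else 0) + (if q 1 then 1 else 0) := by
  rw [show (2:ℕ) = 0+1+1 by rfl, Nat.count_succ, Nat.count_succ, Nat.count_zero]
  norm_num

lemma count_five (q : ℕ → Prop) [DecidablePred q] :
    Nat.count q 5 = (if q 0 then 1 else 0) + (if q 1 then 1 else 0) + (if q 2 then 1 else 0)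
      + (if q 3 then 1 else 0) + (if q 4 then 1 else 0) := by
  rw [show (5:ℕ) = 0+1+1+1+1+1 by rfl, Nat.count_succ, Nat.count_succ, Nat.count_succ,
    Nat.count_succ, Nat.count_succ, Nat.count_zero]
  norm_num

lemma count_add_two (p : ℕ → Prop) [DecidablePred p] (n : ℕ) :
    Nat.count p (n + 2) = Nat.count p n + ((if p n then 1 else 0) + (if p (n+1) then 1 else 0)) := by
  rw [Nat.count_add, count_two]
  simp

lemma count_add_five (p : ℕ → Prop) [DecidablePred p] (n : ℕ) :
    Nat.count p (n + 5) = Nat.count p n + ((if p n then 1 else 0) + (if p (n+1) then 1 else 0)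
      + (if p (n+2) then 1 else 0) + (if p (n+3) then 1 else 0) + (if p (n+4) then 1 else 0)) := by
  rw [Nat.count_add, count_five]
  simp

lemma count1_eq (ℓ : ℕ) : ∀ k, k ≤ 5 * ℓ → Nat.count (inGamma1 ℓ) (2 * k) = k := by
  intro k
  induction k with
  | zero => intro _; simp
  | succ k ih =>
    intro hk
    have h1 : inGamma1 ℓ (2 * k) := ⟨k, 0, by ring⟩
    have h2 : ¬ inGamma1 ℓ (2 * k + 1) := by
      intro hp
      rw [mem1_iff] at hp
      have hm : (2 * k + 1) % 2 = 1 := by omega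
      rw [hm] at hp
      omega
    rw [show 2 * (k + 1) = 2 * k + 2 by ring, count_add_two, ih (by omega),
      if_pos h1, if_neg h2]

lemma count2_low (ℓ : ℕ) : ∀ t, t ≤ 5 * ℓ → Nat.count (inGamma2 ℓ) (5 * t) = t := by
  intro t
  induction t with
  | zero => intro _; simp
  | succ t ih =>
    intro ht
    have h0 : inGamma2 ℓ (5 * t) := ⟨t, 0, by ring⟩
    have hn : ∀ i, 1 ≤ i → i ≤ 4 → ¬ inGamma2 ℓ (5 * t + i) := by
      intro i h1 h4 hp
      rw [mem2_iff] at hp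
      have hm : (5 * t + i) % 5 = i := by omega
      rw [hm] at hp
      interval_cases i <;> omega
    rw [show 5 * (t + 1) = 5 * t + 5 by ring, count_add_five, ih (by omega),
      if_pos h0, if_neg (hn 1 (by omega) (by omega)), if_neg (hn 2 (by omega) (by omega)),
      if_neg (hn 3 (by omega) (by omega)), if_neg (hn 4 (by omega) (by omega))]

lemma count2_mid (ℓ : ℕ) : ∀ t, t ≤ 5 * ℓ →
    Nat.count (inGamma2 ℓ) (25 * ℓ + 5 * t) = 5 * ℓ + 2 * t := by
  intro t
  induction t with
  | zero =>
    intro _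
    have := count2_low ℓ (5 * ℓ) le_rfl
    rw [show 25 * ℓ + 5 * 0 = 5 * (5 * ℓ) by ring, this]
    omega
  | succ t ih =>
    intro ht
    have h0 : inGamma2 ℓ (25 * ℓ + 5 * t) := ⟨5 * ℓ + t, 0, by ring⟩
    have h1 : inGamma2 ℓ (25 * ℓ + 5 * t + 1) := ⟨t, 1, by ring⟩
    have hn : ∀ i, 2 ≤ i → i ≤ 4 → ¬ inGamma2 ℓ (25 * ℓ + 5 * t + i) := by
      intro i h2 h4 hp
      rw [mem2_iff] at hp
      have hm : (25 * ℓ + 5 * t + i) % 5 = i := by omega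
      rw [hm] at hp
      interval_cases i <;> omega
    rw [show 25 * ℓ + 5 * (t + 1) = (25 * ℓ + 5 * t) + 5 by ring, count_add_five,
      ih (by omega), if_pos h0, if_pos h1, if_neg (hn 2 (by omega) (by omega)),
      if_neg (hn 3 (by omega) (by omega)), if_neg (hn 4 (by omega) (by omega))]
    omega

lemma count2_high (ℓ : ℕ) : ∀ t, t ≤ 5 * ℓ →
    Nat.count (inGamma2 ℓ) (50 * ℓ + 5 * t) = 15 * ℓ + 3 * t := by
  intro t
  induction t with
  | zero =>
    intro _
    have := count2_mid ℓ (5 * ℓ) le_rfl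
    rw [show 50 * ℓ + 5 * 0 = 25 * ℓ + 5 * (5 * ℓ) by ring, this]
    omega
  | succ t ih =>
    intro ht
    have h0 : inGamma2 ℓ (50 * ℓ + 5 * t) := ⟨10 * ℓ + t, 0, by ring⟩
    have h1 : inGamma2 ℓ (50 * ℓ + 5 * t + 1) := ⟨5 * ℓ + t, 1, by ring⟩
    have h2 : inGamma2 ℓ (50 * ℓ + 5 * t + 2) := ⟨t, 2, by ring⟩
    have hn : ∀ i, 3 ≤ i → i ≤ 4 → ¬ inGamma2 ℓ (50 * ℓ + 5 * t + i) := by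
      intro i h3 h4 hp
      rw [mem2_iff] at hp
      have hm : (50 * ℓ + 5 * t + i) % 5 = i := by omega
      rw [hm] at hp
      interval_cases i <;> omega
    rw [show 50 * ℓ + 5 * (t + 1) = (50 * ℓ + 5 * t) + 5 by ring, count_add_five,
      ih (by omega), if_pos h0, if_pos h1, if_pos h2,
      if_neg (hn 3 (by omega) (by omega)), if_neg (hn 4 (by omega) (by omega))]
    omega

lemma nth1_eq (ℓ k : ℕ) (hk : k ≤ 5 * ℓ) : Nat.nth (inGamma1 ℓ) k = 2 * k := by
  have h := Nat.nth_count (p := inGamma1 ℓ) (n := 2 * k) ⟨k, 0, by ring⟩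
  rwa [count1_eq ℓ k hk] at h

lemma nth2_mid (ℓ s e : ℕ) (hs : s ≤ 5 * ℓ) (he : e ≤ 1) :
    Nat.nth (inGamma2 ℓ) (5 * ℓ + 2 * s + e) = 25 * ℓ + 5 * s + e := by
  have h0 : inGamma2 ℓ (25 * ℓ + 5 * s) := ⟨5 * ℓ + s, 0, by ring⟩
  interval_cases e
  · have h := Nat.nth_count (p := inGamma2 ℓ) (n := 25 * ℓ + 5 * s) h0
    rwa [count2_mid ℓ s hs] at h
  · have h1 : inGamma2 ℓ (25 * ℓ + 5 * s + 1) := ⟨s, 1, by ring⟩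
    have hc : Nat.count (inGamma2 ℓ) (25 * ℓ + 5 * s + 1) = 5 * ℓ + 2 * s + 1 := by
      rw [Nat.count_succ, count2_mid ℓ s hs, if_pos h0]
    have h := Nat.nth_count (p := inGamma2 ℓ) (n := 25 * ℓ + 5 * s + 1) h1
    rwa [hc] at h

lemma nth2_high (ℓ s e : ℕ) (hs : s ≤ 5 * ℓ) (he : e ≤ 2) :
    Nat.nth (inGamma2 ℓ) (15 * ℓ + 3 * s + e) = 50 * ℓ + 5 * s + e := by
  have h0 : inGamma2 ℓ (50 * ℓ + 5 * s) := ⟨10 * ℓ + s, 0, by ring⟩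
  have h1 : inGamma2 ℓ (50 * ℓ + 5 * s + 1) := ⟨5 * ℓ + s, 1, by ring⟩
  have hc1 : Nat.count (inGamma2 ℓ) (50 * ℓ + 5 * s + 1) = 15 * ℓ + 3 * s + 1 := by
    rw [Nat.count_succ, count2_high ℓ s hs, if_pos h0]
  interval_cases e
  · have h := Nat.nth_count (p := inGamma2 ℓ) (n := 50 * ℓ + 5 * s) h0
    rwa [count2_high ℓ s hs] at h
  · have h := Nat.nth_count (p := inGamma2 ℓ) (n := 50 * ℓ + 5 * s + 1) h1
    rwa [hc1] at h
  · have h2 : inGamma2 ℓ (50 * ℓ + 5 * s + 2) := ⟨s, 2, by ring⟩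
    have hc2 : Nat.count (inGamma2 ℓ) (50 * ℓ + 5 * s + 2) = 15 * ℓ + 3 * s + 2 := by
      rw [show 50 * ℓ + 5 * s + 2 = (50 * ℓ + 5 * s + 1) + 1 by ring, Nat.count_succ,
        hc1, if_pos h1]
    have h := Nat.nth_count (p := inGamma2 ℓ) (n := 50 * ℓ + 5 * s + 2) h2
    rwa [hc2] at h

/-- `min_{0 ≤ k ≤ 5ℓ} (Γ₂(k+13ℓ) − Γ₁(k)) = 45ℓ − 1`, attained at `k = 1` and
at `k = 5ℓ − 1`. -/
theorem stmt_7 (ℓ : ℕ) (hℓ : 0 < ℓ) :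
    (∀ k : ℕ, k ≤ 5 * ℓ → (45 * ℓ - 1 : ℤ) ≤ fdiff ℓ k) ∧
    fdiff ℓ 1 = 45 * ℓ - 1 ∧ fdiff ℓ (5 * ℓ - 1) = 45 * ℓ - 1 := by
  refine ⟨?_, ?_, ?_⟩
  · intro k hk
    unfold fdiff
    rw [nth1_eq ℓ k hk]
    by_cases hcase : k ≤ 2 * ℓ
    · set s := k / 2 with hs
      set e := k % 2 with he
      have hke : k = 2 * s + e := by omega
      have he1 : e ≤ 1 := by omega
      have hsl : 4 * ℓ + s ≤ 5 * ℓ := by omega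
      rw [show k + 13 * ℓ = 5 * ℓ + 2 * (4 * ℓ + s) + e by omega,
        nth2_mid ℓ (4 * ℓ + s) e hsl he1]
      push_cast
      omega
    · set s := (k - 2 * ℓ) / 3 with hs
      set e := (k - 2 * ℓ) % 3 with he
      have hke : k = 2 * ℓ + 3 * s + e := by omega
      have he2 : e ≤ 2 := by omega
      have hsl : s ≤ 5 * ℓ := by omega
      rw [show k + 13 * ℓ = 15 * ℓ + 3 * s + e by omega, nth2_high ℓ s e hsl he2]
      push_cast
      omega
  · unfold fdiff
    rw [nth1_eq ℓ 1 (by omega),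
      show 1 + 13 * ℓ = 5 * ℓ + 2 * (4 * ℓ) + 1 by ring,
      nth2_mid ℓ (4 * ℓ) 1 (by omega) (by omega)]
    push_cast
    ring
  · obtain ⟨m, rfl⟩ : ∃ m, ℓ = m + 1 := ⟨ℓ - 1, by omega⟩
    unfold fdiff
    rw [nth1_eq (m + 1) (5 * (m + 1) - 1) (by omega),
      show 5 * (m + 1) - 1 + 13 * (m + 1) = 15 * (m + 1) + 3 * m + 2 by omega,
      nth2_high (m + 1) m 2 (by omega) (by omega)]
    push_cast
    have : (↑(5 * (m + 1) - 1) : ℤ) = 5 * (m + 1) - 1 := by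
      push_cast [Nat.cast_sub (by omega : 1 ≤ 5 * (m + 1))]
      ring
    rw [this]
    ring
end

section
/- Let ℓ be a positive integer and 0 < s ≤ 8ℓ. Let Γ₂ be the enumerating function of the numerical semigroup ⟨5, 25ℓ+1⟩. Then Γ₂(13ℓ − s) ≤ 45ℓ − 2s − 1. -/
instance inst_s9 (ℓ : ℕ) : DecidablePred (inGamma2 ℓ) := fun x =>
  decidable_of_iff (∃ a < x + 1, ∃ b < x + 1, x = 5 * a + (25 * ℓ + 1) * b) <| by
    constructor
    · rintro ⟨a, -, b, -, h⟩; exact ⟨a, b, h⟩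
    · rintro ⟨a, b, h⟩
      refine ⟨a, ?_, b, ?_, h⟩ <;> nlinarith

/-- explicit enumeration of `⟨5, 25ℓ+1⟩` (valid up to index `13ℓ`). -/
def gfun (ℓ i : ℕ) : ℕ :=
  if i ≤ 5 * ℓ then 5 * i else 25 * ℓ + 5 * ((i - 5 * ℓ) / 2) + (i - 5 * ℓ) % 2

lemma gfun_mem (ℓ i : ℕ) : inGamma2 ℓ (gfun ℓ i) := by
  unfold gfun
  split_ifs with h
  · exact ⟨i, 0, by ring⟩
  · rcases Nat.mod_two_eq_zero_or_one (i - 5 * ℓ) with he | ho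
    · exact ⟨5 * ℓ + (i - 5 * ℓ) / 2, 0, by omega⟩
    · exact ⟨(i - 5 * ℓ) / 2, 1, by omega⟩

lemma gfun_strictMono (ℓ : ℕ) : StrictMono (gfun ℓ) := by
  apply strictMono_nat_of_lt_succ
  intro i
  unfold gfun
  split_ifs <;> omega

/-- For `0 < s ≤ 8ℓ`, `Γ₂(13ℓ − s) ≤ 45ℓ − 2s − 1`. -/
theorem stmt_9 (ℓ s : ℕ) (hℓ : 0 < ℓ) (hs : 0 < s) (hs' : s ≤ 8 * ℓ) :
    (Nat.nth (inGamma2 ℓ) (13 * ℓ - s) : ℤ) ≤ 45 * ℓ - 2 * s - 1 := by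
  set n := 13 * ℓ - s with hn
  have key : Nat.nth (inGamma2 ℓ) n < gfun ℓ n + 1 := by
    apply Nat.nth_lt_of_lt_count
    have hcard : n + 1 ≤ ((Finset.range (gfun ℓ n + 1)).filter (inGamma2 ℓ)).card := by
      have : Finset.range (n + 1) ⊆
          ((Finset.range (gfun ℓ n + 1)).filter (inGamma2 ℓ)).image (fun x => x) → True := fun _ => trivial
      calc n + 1 = ((Finset.range (n + 1)).image (gfun ℓ)).card := by
            rw [Finset.card_image_of_injective _ (gfun_strictMono ℓ).injective, Finset.card_range]
        _ ≤ _ := by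
            apply Finset.card_le_card
            intro x hx
            simp only [Finset.mem_image, Finset.mem_range] at hx
            obtain ⟨i, hi, rfl⟩ := hx
            simp only [Finset.mem_filter, Finset.mem_range]
            exact ⟨by have := (gfun_strictMono ℓ).monotone (by omega : i ≤ n); omega, gfun_mem ℓ i⟩
    rwa [Nat.count_eq_card_filter_range]
  have hgn : gfun ℓ n + 2 * s + 1 ≤ 45 * ℓ := by
    unfold gfun
    split_ifs <;> omega
  have h2 : Nat.nth (inGamma2 ℓ) n + 2 * s + 1 ≤ 45 * ℓ := by omega
  omega
end

section
/- Consider positive integers n and the short exact sequence of abelian groups 0 → ℤ →α ℤ^h ⊕ ℤ/2ℤ →β G → 0 where G ≅ ℤ^{h−1} ⊕ ℤ/4ℤ. Then α(1) = (c, 1) for some nonzero c ∈ ℤ^h, and c = 2d for a primitive element d ∈ ℤ^h. -/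
/-- Given a short exact sequence `0 → ℤ →α ℤ^h ⊕ ℤ/2 →β ℤ^{h−1} ⊕ ℤ/4 → 0`,
one has `α(1) = (c, 1)` with `c ≠ 0`, and `c = 2d` for a primitive `d ∈ ℤ^h`
(primitive meaning: `d` is not a non-unit multiple of another element). -/
theorem stmt_12 (h : ℕ) (hh : 1 ≤ h)
    (α : ℤ →+ (Fin h → ℤ) × ZMod 2)
    (β : (Fin h → ℤ) × ZMod 2 →+ (Fin (h - 1) → ℤ) × ZMod 4)
    (hinj : Function.Injective α)
    (hsurj : Function.Surjective β)
    (hexact : ∀ x : (Fin h → ℤ) × ZMod 2, β x = 0 ↔ x ∈ Set.range α) :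
    (α 1).1 ≠ 0 ∧ (α 1).2 = 1 ∧
      ∃ d : Fin h → ℤ, (α 1).1 = 2 • d ∧
        ∀ (m : ℤ) (e : Fin h → ℤ), d = m • e → IsUnit m := by
  set c := (α 1).1 with hc_def
  set ε := (α 1).2 with hε_def
  -- basic computations
  have h2z : ∀ t : ZMod 2, (2:ℤ) • t = 0 := by
    intro t
    rw [zsmul_eq_mul, show ((2:ℤ) : ZMod 2) = 0 by decide, zero_mul]
  have h4z : ∀ t : ZMod 4, (4:ℤ) • t = 0 := by
    intro t
    rw [zsmul_eq_mul, show ((4:ℤ) : ZMod 4) = 0 by decide, zero_mul]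
  have h2tor : ∀ z : ZMod 4, (2:ℤ) • z = 0 → z = 0 ∨ z = 2 := by
    intro z hz
    rw [zsmul_eq_mul, show ((2:ℤ) : ZMod 4) = 2 by decide] at hz
    revert hz; revert z; decide
  have hα1 : ∀ n : ℤ, (α n).1 = n • c := by
    intro n
    rw [show α n = n • α 1 by rw [← map_zsmul, smul_eq_mul, mul_one]]
    simp
    rfl
  have hα2 : ∀ n : ℤ, (α n).2 = n • ε := by
    intro n
    rw [show α n = n • α 1 by rw [← map_zsmul, smul_eq_mul, mul_one]]
    simp
    exact Or.inl rfl
  have hker : ∀ x : (Fin h → ℤ) × ZMod 2, β x = 0 →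
      ∃ n : ℤ, x.1 = n • c ∧ x.2 = n • ε := by
    intro x hx
    obtain ⟨n, hn⟩ := (hexact x).mp hx
    exact ⟨n, by rw [← hn, hα1], by rw [← hn, hα2]⟩
  -- c ≠ 0
  have hc : c ≠ 0 := by
    intro h0
    have h2 : α 2 = α 0 := by
      apply Prod.ext
      · rw [hα1, hα1, h0, smul_zero, smul_zero]
      · rw [hα2, hα2, h2z, zero_smul]
    exact absurd (hinj h2) (by norm_num)
  -- β(0,1) ≠ 0
  have hβ01 : β ((0 : Fin h → ℤ), (1 : ZMod 2)) ≠ 0 := by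
    intro h0
    obtain ⟨n, h1, h2⟩ := hker _ h0
    have hn0 : n = 0 := by
      rcases smul_eq_zero.mp h1.symm with hn | hcc
      · exact hn
      · exact absurd hcc hc
    rw [hn0, zero_smul] at h2
    exact one_ne_zero h2
  -- ε = 1
  have hε : ε = 1 := by
    rcases (show ∀ z : ZMod 2, z = 0 ∨ z = 1 by decide) ε with h0 | h1
    · exfalso
      -- 2 • β(0,1) = 0
      have hdbl : (2:ℤ) • β ((0 : Fin h → ℤ), (1 : ZMod 2)) = 0 := by
        rw [← map_zsmul]
        have : (2:ℤ) • ((0 : Fin h → ℤ), (1 : ZMod 2)) = 0 := by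
          apply Prod.ext
          · simp
          · exact h2z 1
        rw [this, map_zero]
      set y := β ((0 : Fin h → ℤ), (1 : ZMod 2)) with hy
      have hy1 : y.1 = 0 := by
        have : (2:ℤ) • y.1 = 0 := by rw [← Prod.smul_fst, hdbl]; rfl
        rcases smul_eq_zero.mp this with hn | hv
        · norm_num at hn
        · exact hv
      have hy2 : y.2 = 0 ∨ y.2 = 2 := by
        apply h2tor
        rw [← Prod.smul_snd, hdbl]; rfl
      rcases hy2 with hy2 | hy2
      · exact hβ01 (Prod.ext hy1 hy2)
      · -- y = (0,2) = 2 • β s where β s = (0,1)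
        obtain ⟨s, hs⟩ := hsurj ((0 : Fin (h-1) → ℤ), (1 : ZMod 4))
        have hβx : β ((2:ℤ) • s - ((0 : Fin h → ℤ), (1 : ZMod 2))) = 0 := by
          rw [map_sub, map_zsmul, hs, ← hy]
          apply Prod.ext
          · simp [hy1]
          · show (2:ℤ) • (1 : ZMod 4) - y.2 = 0
            rw [hy2, zsmul_eq_mul, show ((2:ℤ) : ZMod 4) = 2 by decide]
            decide
        obtain ⟨n, _, h2'⟩ := hker _ hβx
        rw [h0, smul_zero] at h2'
        have : ((2:ℤ) • s - ((0 : Fin h → ℤ), (1 : ZMod 2))).2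
            = (2:ℤ) • s.2 - 1 := by simp
        rw [this, h2z] at h2'
        rw [zero_sub] at h2'
        exact one_ne_zero (neg_eq_zero.mp h2')
    · exact h1
  -- β(c, 0) = (0, 2)
  have hα1eq : α 1 = (c, (1 : ZMod 2)) := by
    apply Prod.ext
    · rfl
    · rw [← hε]
  have hβc1 : β (c, (1 : ZMod 2)) = 0 := by
    rw [← hα1eq]
    exact (hexact _).mpr ⟨1, rfl⟩
  have hβc0 : β (c, (0 : ZMod 2)) = - β ((0 : Fin h → ℤ), (1 : ZMod 2)) := by
    have : (c, (0 : ZMod 2)) = (c, (1 : ZMod 2)) - ((0 : Fin h → ℤ), (1 : ZMod 2)) := by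
      apply Prod.ext <;> simp
    rw [this, map_sub, hβc1, zero_sub]
  have hβc0ne : β (c, (0 : ZMod 2)) ≠ 0 := by
    rw [hβc0, neg_ne_zero]; exact hβ01
  have hα2eq : α 2 = (2:ℤ) • (c, (0 : ZMod 2)) := by
    apply Prod.ext
    · rw [hα1]; simp
    · rw [hα2, hε, h2z]
      exact (h2z 0).symm
  have hdblc : (2:ℤ) • β (c, (0 : ZMod 2)) = 0 := by
    rw [← map_zsmul, ← hα2eq]
    exact (hexact _).mpr ⟨2, rfl⟩
  have hβc0snd : (β (c, (0 : ZMod 2))).2 = 2 := by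
    rcases h2tor _ (show (2:ℤ) • (β (c, (0 : ZMod 2))).2 = 0 by
      rw [← Prod.smul_snd, hdblc]; rfl) with h0 | h2'
    · exfalso
      apply hβc0ne
      apply Prod.ext
      · have : (2:ℤ) • (β (c, (0 : ZMod 2))).1 = 0 := by
          rw [← Prod.smul_fst, hdblc]; rfl
        rcases smul_eq_zero.mp this with hn | hv
        · norm_num at hn
        · exact hv
      · exact h0
    · exact h2'
  have hβc0fst : (β (c, (0 : ZMod 2))).1 = 0 := by
    have : (2:ℤ) • (β (c, (0 : ZMod 2))).1 = 0 := by
      rw [← Prod.smul_fst, hdblc]; rfl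
    rcases smul_eq_zero.mp this with hn | hv
    · norm_num at hn
    · exact hv
  -- get d with c = 2d
  obtain ⟨s, hs⟩ := hsurj ((0 : Fin (h-1) → ℤ), (1 : ZMod 4))
  have hβx : β ((2:ℤ) • s - (c, (0 : ZMod 2))) = 0 := by
    rw [map_sub, map_zsmul, hs]
    apply Prod.ext
    · rw [Prod.fst_sub, hβc0fst]
      simp
    · rw [Prod.snd_sub, hβc0snd]
      show (2:ℤ) • (1 : ZMod 4) - 2 = 0
      rw [zsmul_eq_mul, show ((2:ℤ) : ZMod 4) = 2 by decide]
      decide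
  obtain ⟨n, hn1, hn2⟩ := hker _ hβx
  have hsnd : ((2:ℤ) • s - (c, (0 : ZMod 2))).2 = 0 := by
    show (2:ℤ) • s.2 - 0 = 0
    rw [h2z, sub_zero]
  rw [hsnd, hε, zsmul_eq_mul, mul_one] at hn2
  obtain ⟨k, hk⟩ := (ZMod.intCast_zmod_eq_zero_iff_dvd n 2).mp hn2.symm
  have hfst : ((2:ℤ) • s - (c, (0 : ZMod 2))).1 = (2:ℤ) • s.1 - c := by simp
  rw [hfst, hk] at hn1
  set d : Fin h → ℤ := s.1 - k • c with hd_def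
  have hcd : c = (2:ℤ) • d := by
    funext i
    have hi := congrFun hn1 i
    simp only [Pi.smul_apply, Pi.sub_apply, smul_eq_mul, hd_def] at hi ⊢
    push_cast at hi
    linarith
  refine ⟨hc, hε, d, ?_, ?_⟩
  · rw [hcd]
    norm_num
  · intro m e hme
    -- m ≠ 0
    have hm0 : m ≠ 0 := by
      intro h0
      apply hc
      rw [hcd, hme, h0, zero_smul, smul_zero]
    -- e ≠ 0
    have he0 : e ≠ 0 := by
      intro h0
      apply hc
      rw [hcd, hme, h0, smul_zero, smul_zero]
    -- (4m) • (e, 0) = α 2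
    have hkey : ((4 * m : ℤ)) • ((e, (0 : ZMod 2)) : (Fin h → ℤ) × ZMod 2) = α 2 := by
      rw [hα2eq]
      apply Prod.ext
      · show (4 * m : ℤ) • e = (2:ℤ) • (c, (0:ZMod 2)).1
        show (4 * m : ℤ) • e = (2:ℤ) • c
        rw [hcd, hme, smul_smul, smul_smul]
        ring_nf
      · show (4 * m : ℤ) • (0 : ZMod 2) = (2:ℤ) • (0 : ZMod 2)
        rw [smul_zero, smul_zero]
    have h4m : (4 * m : ℤ) • β (e, (0 : ZMod 2)) = 0 := by
      rw [← map_zsmul, hkey]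
      exact (hexact _).mpr ⟨2, rfl⟩
    set y := β (e, (0 : ZMod 2)) with hy
    have hy1 : y.1 = 0 := by
      have : (4 * m : ℤ) • y.1 = 0 := by rw [← Prod.smul_fst, h4m]; rfl
      rcases smul_eq_zero.mp this with hn | hv
      · exact absurd hn (by simpa using hm0)
      · exact hv
    have h4y : (4:ℤ) • y = 0 := by
      apply Prod.ext
      · rw [Prod.smul_fst, hy1, smul_zero]; rfl
      · rw [Prod.smul_snd, h4z]; rfl
    have hβ4e : β ((4:ℤ) • (e, (0 : ZMod 2))) = 0 := by
      rw [map_zsmul, ← hy, h4y]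
    obtain ⟨n', hn1', hn2'⟩ := hker _ hβ4e
    have hsnd' : ((4:ℤ) • ((e, (0 : ZMod 2)) : (Fin h → ℤ) × ZMod 2)).2 = 0 := by
      rw [Prod.smul_snd, smul_zero]
    rw [hsnd', hε, zsmul_eq_mul, mul_one] at hn2'
    obtain ⟨k', hk'⟩ := (ZMod.intCast_zmod_eq_zero_iff_dvd n' 2).mp hn2'.symm
    have hfst' : ((4:ℤ) • ((e, (0 : ZMod 2)) : (Fin h → ℤ) × ZMod 2)).1 = (4:ℤ) • e := by
      rw [Prod.smul_fst]
    rw [hfst', hk', hcd, hme] at hn1'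
    -- 4 e = 2k' • 2 • m • e
    obtain ⟨i, hi⟩ := Function.ne_iff.mp he0
    have hii := congrFun hn1' i
    simp only [Pi.smul_apply, smul_eq_mul] at hii
    push_cast at hii
    -- 4 * e i = 2k' * (2 * (m * e i))
    have hkm : k' * m = 1 := by
      have hei : (e i : ℤ) ≠ 0 := hi
      have : 4 * e i = 4 * (k' * m) * e i := by linarith [hii]
      have h4 : (4 : ℤ) * (1 - k' * m) * e i = 0 := by ring_nf; linarith [this]
      rcases mul_eq_zero.mp h4 with h' | h''
      · rcases mul_eq_zero.mp h' with h1 | h2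
        · norm_num at h1
        · linarith [h2]
      · exact absurd h'' hei
    exact IsUnit.of_mul_eq_one (a := m) k' (by linarith [hkm])
end
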